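/- Let F₁, …, F_n be n generic homogeneous polynomials in the n variables x₁, …, x_n of positive total degrees d₁, …, d_n, with coefficient indeterminate set A, and let R ∈ ℤ[A] be a generator of the (principal) ideal of inertia forms for F₁, …, F_n. Let K be a field and let φ : ℤ[A] → K be a ring homomorphism (a specialization of the coefficients in K). Then φ(R) = 0 if and only if the system φ(F₁) = 0, …, φ(F_n) = 0 has a non-trivial zero (a common zero with not all coordinates zero) in the algebraic closure of K. -/

import Mathlib

open MvPolynomial

/-- The index set `A` of generic coefficients for `r` generic homogeneous polynomials
of degrees `d 0, …, d (r-1)` in `n` variables: one indeterminate for each pair of an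
index `i` and a monomial in `x₁, …, x_n` of total degree `d i`. -/
def CoeffIdx (n r : ℕ) (d : Fin r → ℕ) : Type :=
  Σ i : Fin r, {m : Fin n →₀ ℕ // m ∈ Finset.finsuppAntidiag (Finset.univ : Finset (Fin n)) (d i)}

/-- The `i`-th generic homogeneous polynomial `F i` of total degree `d i` in the
variables `x₁, …, x_n`: every possible coefficient is a distinct indeterminate. -/
noncomputable def genericHom (n r : ℕ) (d : Fin r → ℕ) (i : Fin r) :
    MvPolynomial (Fin n) (MvPolynomial (CoeffIdx n r d) ℤ) :=
  ∑ m ∈ (Finset.finsuppAntidiag (Finset.univ : Finset (Fin n)) (d i)).attach,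
    monomial m.1 (X (⟨i, m⟩ : CoeffIdx n r d))

/-- `T ∈ ℤ[A]` is an inertia form for the generic `F 0, …, F (r-1)` if
`x_i ^ τ * T ∈ (F 0, …, F (r-1))` for a suitable variable `x_i` and exponent `τ`. -/
def IsInertiaForm (n r : ℕ) (d : Fin r → ℕ) (T : MvPolynomial (CoeffIdx n r d) ℤ) : Prop :=
  ∃ (i : Fin n) (τ : ℕ),
    (X i : MvPolynomial (Fin n) (MvPolynomial (CoeffIdx n r d) ℤ)) ^ τ * C T ∈
      Ideal.span (Set.range (genericHom n r d))

lemma degree_eq_sum_univ {n : ℕ} (m : Fin n →₀ ℕ) : m.degree = ∑ i, m i := by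
  rw [Finsupp.degree]
  exact Finset.sum_subset (Finset.subset_univ _)
    (fun x _ hx => Finsupp.notMem_support_iff.mp hx)

lemma genericHom_isHomogeneous (n r : ℕ) (d : Fin r → ℕ) (i : Fin r) :
    (genericHom n r d i).IsHomogeneous (d i) := by
  apply MvPolynomial.IsHomogeneous.sum
  rintro ⟨m, hm⟩ -
  apply isHomogeneous_monomial
  rw [Finset.mem_finsuppAntidiag] at hm
  rw [degree_eq_sum_univ, hm.1]

lemma mem_antidiag_equivMapDomain {n : ℕ} (π : Fin n ≃ Fin n) {δ : ℕ} {m : Fin n →₀ ℕ}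
    (hm : m ∈ Finset.finsuppAntidiag (Finset.univ : Finset (Fin n)) δ) :
    Finsupp.equivMapDomain π m ∈ Finset.finsuppAntidiag (Finset.univ : Finset (Fin n)) δ := by
  rw [Finset.mem_finsuppAntidiag] at hm ⊢
  refine ⟨?_, Finset.subset_univ _⟩
  rw [← hm.1]
  rw [show (⇑(Finsupp.equivMapDomain π m) : Fin n → ℕ) = fun a => m (π.symm a) from
    funext fun a => Finsupp.equivMapDomain_apply π m a]
  exact Equiv.sum_comp π.symm m

/-- relabelling of the coefficient indeterminates induced by a permutation of variables -/
def coeffEquiv (n r : ℕ) (d : Fin r → ℕ) (π : Fin n ≃ Fin n) :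
    CoeffIdx n r d ≃ CoeffIdx n r d :=
  Equiv.sigmaCongrRight fun _ =>
    { toFun := fun m => ⟨Finsupp.equivMapDomain π m.1, mem_antidiag_equivMapDomain π m.2⟩
      invFun := fun m => ⟨Finsupp.equivMapDomain π.symm m.1,
        mem_antidiag_equivMapDomain π.symm m.2⟩
      left_inv := fun m => by
        ext a
        simp [Finsupp.equivMapDomain_apply]
      right_inv := fun m => by
        ext a
        simp [Finsupp.equivMapDomain_apply] }

/-- The symmetry ring endomorphism of the generic polynomial ring -/
noncomputable def symS (n r : ℕ) (d : Fin r → ℕ) (π : Fin n ≃ Fin n) :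
    MvPolynomial (Fin n) (MvPolynomial (CoeffIdx n r d) ℤ) →+*
    MvPolynomial (Fin n) (MvPolynomial (CoeffIdx n r d) ℤ) :=
  ((rename (⇑π)).toRingHom : MvPolynomial (Fin n) (MvPolynomial (CoeffIdx n r d) ℤ) →+* _).comp
    (map ((rename (⇑(coeffEquiv n r d π))).toRingHom))

lemma symS_monomial (n r : ℕ) (d : Fin r → ℕ) (π : Fin n ≃ Fin n) (m : Fin n →₀ ℕ)
    (c : MvPolynomial (CoeffIdx n r d) ℤ) :
    symS n r d π (monomial m c)
      = monomial (Finsupp.equivMapDomain π m) (rename (⇑(coeffEquiv n r d π)) c) := by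
  simp only [symS, RingHom.comp_apply, map_monomial, RingHom.coe_coe, AlgHom.toRingHom_eq_coe]
  rw [rename_monomial, Finsupp.equivMapDomain_eq_mapDomain]

lemma symS_genericHom (n r : ℕ) (d : Fin r → ℕ) (π : Fin n ≃ Fin n) (k : Fin r) :
    symS n r d π (genericHom n r d k) = genericHom n r d k := by
  simp only [genericHom, map_sum]
  refine Finset.sum_bij' (fun m _ => ⟨Finsupp.equivMapDomain π m.1,
      mem_antidiag_equivMapDomain π m.2⟩)
    (fun m _ => ⟨Finsupp.equivMapDomain π.symm m.1, mem_antidiag_equivMapDomain π.symm m.2⟩)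
    (fun _ _ => Finset.mem_attach _ _) (fun _ _ => Finset.mem_attach _ _) ?_ ?_ ?_
  · intro m _
    ext a
    simp [Finsupp.equivMapDomain_apply]
  · intro m _
    ext a
    simp [Finsupp.equivMapDomain_apply]
  · intro m _
    rw [symS_monomial]
    exact congrArg (monomial _) (rename_X _ _)

lemma symS_mem_span (n r : ℕ) (d : Fin r → ℕ) (π : Fin n ≃ Fin n)
    {p : MvPolynomial (Fin n) (MvPolynomial (CoeffIdx n r d) ℤ)}
    (hp : p ∈ Ideal.span (Set.range (genericHom n r d))) :
    symS n r d π p ∈ Ideal.span (Set.range (genericHom n r d)) := by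
  have h1 := Ideal.mem_map_of_mem (symS n r d π) hp
  rw [Ideal.map_span, ← Set.range_comp] at h1
  have h2 : (symS n r d π) ∘ (genericHom n r d) = genericHom n r d := by
    funext k; exact symS_genericHom n r d π k
  rwa [h2] at h1

lemma symS_X_pow_mul_C (n r : ℕ) (d : Fin r → ℕ) (π : Fin n ≃ Fin n) (i : Fin n) (τ : ℕ)
    (T : MvPolynomial (CoeffIdx n r d) ℤ) :
    symS n r d π ((X i) ^ τ * C T)
      = (X (π i)) ^ τ * C (rename (⇑(coeffEquiv n r d π)) T) := by
  rw [map_mul, map_pow]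
  congr 1
  · congr 1
    simp [symS]
  · simp [symS, map_C]

lemma coeffEquiv_invol (n r : ℕ) (d : Fin r → ℕ) (i j : Fin n) (a : CoeffIdx n r d) :
    coeffEquiv n r d (Equiv.swap i j) (coeffEquiv n r d (Equiv.swap i j) a) = a := by
  rcases a with ⟨k, m⟩
  have : (⟨Finsupp.equivMapDomain (Equiv.swap i j)
      (Finsupp.equivMapDomain (Equiv.swap i j) m.1),
      mem_antidiag_equivMapDomain _ (mem_antidiag_equivMapDomain _ m.2)⟩ :
      {m : Fin n →₀ ℕ // m ∈ Finset.finsuppAntidiag Finset.univ (d k)}) = m := by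
    apply Subtype.ext
    ext a
    simp [Finsupp.equivMapDomain_apply]
  exact congrArg (fun mm => (⟨k, mm⟩ : CoeffIdx n r d)) this

/-- Transport of the inertia relation for the resultant to an arbitrary variable index,
up to a unit factor. -/
lemma inertia_transport (n : ℕ) (d : Fin n → ℕ) (R : MvPolynomial (CoeffIdx n n d) ℤ)
    (hR : ∀ T, IsInertiaForm n n d T ↔ T ∈ Ideal.span {R}) (hRne : R ≠ 0) (j : Fin n) :
    ∃ (τ : ℕ) (c : MvPolynomial (CoeffIdx n n d) ℤ), IsUnit c ∧
      (X j : MvPolynomial (Fin n) (MvPolynomial (CoeffIdx n n d) ℤ)) ^ τ * C (R * c) ∈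
        Ideal.span (Set.range (genericHom n n d)) := by
  obtain ⟨i, τ, hm⟩ := (hR R).mpr (Ideal.mem_span_singleton_self R)
  set π := Equiv.swap i j with hπ
  have hmem := symS_mem_span n n d π hm
  rw [symS_X_pow_mul_C, Equiv.swap_apply_left] at hmem
  set c0 := rename (⇑(coeffEquiv n n d π)) R with hc0
  have hinert : IsInertiaForm n n d c0 := ⟨j, τ, hmem⟩
  obtain ⟨c, hc⟩ := Ideal.mem_span_singleton.mp ((hR c0).mp hinert)
  -- c0 = R * c ; apply the involution to get that c is a unit
  have hinvol : ∀ T : MvPolynomial (CoeffIdx n n d) ℤ,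
      rename (⇑(coeffEquiv n n d π)) (rename (⇑(coeffEquiv n n d π)) T) = T := by
    intro T
    rw [rename_rename]
    have : (⇑(coeffEquiv n n d π)) ∘ (⇑(coeffEquiv n n d π)) = id := by
      funext a; exact coeffEquiv_invol n n d i j a
    rw [this, rename_id, AlgHom.id_apply]
  have hcc : R = R * (c * rename (⇑(coeffEquiv n n d π)) c) := by
    calc R = rename (⇑(coeffEquiv n n d π)) (rename (⇑(coeffEquiv n n d π)) R) :=
          (hinvol R).symm
    _ = rename (⇑(coeffEquiv n n d π)) (R * c) := by rw [← hc0, hc]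
    _ = rename (⇑(coeffEquiv n n d π)) R * rename (⇑(coeffEquiv n n d π)) c := by
          rw [map_mul]
    _ = c0 * rename (⇑(coeffEquiv n n d π)) c := by rw [← hc0]
    _ = (R * c) * rename (⇑(coeffEquiv n n d π)) c := by rw [hc]
    _ = R * (c * rename (⇑(coeffEquiv n n d π)) c) := by ring
  have hunit : IsUnit c := by
    have h1 : R * 1 = R * (c * rename (⇑(coeffEquiv n n d π)) c) := by
      rw [mul_one]; exact hcc
    have := mul_left_cancel₀ hRne h1
    exact IsUnit.of_mul_eq_one _ this.symm
  exact ⟨τ, c, hunit, by rwa [← hc]⟩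

lemma eval_killer {n : ℕ} {d : Fin n → ℕ} {K : Type*} [Field K]
    (φ : MvPolynomial (CoeffIdx n n d) ℤ →+* K) (x : Fin n → AlgebraicClosure K)
    (hxz : ∀ i, aeval x (map φ (genericHom n n d i)) = 0)
    {p : MvPolynomial (Fin n) (MvPolynomial (CoeffIdx n n d) ℤ)}
    (hp : p ∈ Ideal.span (Set.range (genericHom n n d))) :
    aeval x (map φ p) = 0 := by
  refine Submodule.span_induction ?_ ?_ ?_ ?_ hp
  · rintro q ⟨k, rfl⟩
    exact hxz k
  · simp
  · intro a b _ _ ha hb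
    rw [map_add, map_add, ha, hb, add_zero]
  · intro a b _ hb
    rw [smul_eq_mul, map_mul, map_mul, hb, mul_zero]

lemma easy_direction (n : ℕ) (d : Fin n → ℕ) (R : MvPolynomial (CoeffIdx n n d) ℤ)
    (hR : ∀ T, IsInertiaForm n n d T ↔ T ∈ Ideal.span {R})
    {K : Type*} [Field K] (φ : MvPolynomial (CoeffIdx n n d) ℤ →+* K)
    (x : Fin n → AlgebraicClosure K) (hx0 : x ≠ 0)
    (hxz : ∀ i, aeval x (map φ (genericHom n n d i)) = 0) : φ R = 0 := by
  by_cases hRne : R = 0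
  · rw [hRne, map_zero]
  obtain ⟨j, hj⟩ := Function.ne_iff.mp hx0
  obtain ⟨τ, c, hcu, hmem⟩ := inertia_transport n d R hR hRne j
  have h0 := eval_killer φ x hxz hmem
  rw [map_mul, map_pow, map_X, map_C, map_mul, map_pow, aeval_X, aeval_C, map_mul] at h0
  have hxj : (x j) ^ τ ≠ 0 := pow_ne_zero _ (by simpa using hj)
  have h1 : algebraMap K (AlgebraicClosure K) (φ R * φ c) = 0 :=
    (mul_eq_zero.mp h0).resolve_left hxj
  have h2 : φ R * φ c = 0 := by
    apply (algebraMap K (AlgebraicClosure K)).injective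
    rw [map_zero]
    exact h1
  exact (mul_eq_zero.mp h2).resolve_right (hcu.map φ).ne_zero

lemma hard_direction (n : ℕ) (hn : 0 < n) (d : Fin n → ℕ) (hd : ∀ i, 0 < d i)
    (R : MvPolynomial (CoeffIdx n n d) ℤ)
    (hR : ∀ T, IsInertiaForm n n d T ↔ T ∈ Ideal.span {R})
    {K : Type*} [Field K] (φ : MvPolynomial (CoeffIdx n n d) ℤ →+* K)
    (hcon : ¬∃ x : Fin n → AlgebraicClosure K, x ≠ 0 ∧
      ∀ i, aeval x (map φ (genericHom n n d i)) = 0) :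
    φ R ≠ 0 := by
  classical
  haveI : Nonempty (Fin n) := ⟨⟨0, hn⟩⟩
  set L := AlgebraicClosure K with hL
  set ψ : MvPolynomial (CoeffIdx n n d) ℤ →+* L := (algebraMap K L).comp φ with hψ
  set J : Ideal (MvPolynomial (Fin n) L) :=
    Ideal.span (Set.range fun k => map ψ (genericHom n n d k)) with hJ
  -- Step A : only the trivial common zero
  have hzero : ∀ x : Fin n → L, (∀ k, eval x (map ψ (genericHom n n d k)) = 0) → x = 0 := by
    intro x hx
    by_contra hx0
    apply hcon
    refine ⟨x, hx0, fun k => ?_⟩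
    have hk := hx k
    rw [aeval_def, eval₂_eq_eval_map]
    rwa [hψ, ← map_map] at hk
  -- Step B : Nullstellensatz, powers of the variables lie in J
  have hXrad : ∀ i : Fin n, ∃ N : ℕ, (X i : MvPolynomial (Fin n) L) ^ N ∈ J := by
    intro i
    have hv : (X i : MvPolynomial (Fin n) L) ∈ vanishingIdeal L (zeroLocus L J) := by
      intro x hx
      have hx' : ∀ k, eval x (map ψ (genericHom n n d k)) = 0 := fun k =>
        hx _ (Ideal.subset_span (Set.mem_range_self k))
      rw [hzero x hx']
      simp
    rwa [vanishingIdeal_zeroLocus_eq_radical] at hv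
  choose N hN using hXrad
  set δ : ℕ := (∑ i, N i) + (∑ k, d k) with hδ
  have hdle : ∀ k, d k ≤ δ := fun k =>
    (Finset.single_le_sum (fun _ _ => Nat.zero_le _) (Finset.mem_univ k)).trans
      (Nat.le_add_left _ _)
  -- Step C : all monomials of degree δ lie in J
  have hmono : ∀ m : Fin n →₀ ℕ, (∑ i, m i) = δ → (monomial m (1 : L)) ∈ J := by
    intro m hm
    have hex : ∃ i, N i ≤ m i := by
      by_contra hcon2
      push_neg at hcon2
      have h1 : ∑ i, m i < ∑ i, N i :=
        Finset.sum_lt_sum_of_nonempty Finset.univ_nonempty (fun i _ => hcon2 i)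
      omega
    obtain ⟨i, hi⟩ := hex
    have hsub : monomial m (1 : L) = monomial (m - Finsupp.single i (N i)) 1 * (X i) ^ (N i) := by
      rw [X_pow_eq_monomial, monomial_mul, mul_one, tsub_add_cancel_of_le]
      exact Finsupp.single_le_iff.mpr hi
    rw [hsub]
    exact Ideal.mul_mem_left _ _ (hN i)
  -- the index types
  set V : Finset (Fin n →₀ ℕ) := Finset.finsuppAntidiag Finset.univ δ with hV
  let g : (Σ k : Fin n, {m' : Fin n →₀ ℕ //
        m' ∈ Finset.finsuppAntidiag (Finset.univ : Finset (Fin n)) (δ - d k)}) →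
      MvPolynomial (Fin n) (MvPolynomial (CoeffIdx n n d) ℤ) :=
    fun p => monomial p.2.1 1 * genericHom n n d p.1
  let w : (Σ k : Fin n, {m' : Fin n →₀ ℕ //
        m' ∈ Finset.finsuppAntidiag (Finset.univ : Finset (Fin n)) (δ - d k)}) →
      ({m : Fin n →₀ ℕ // m ∈ V} → L) :=
    fun p m => coeff m.1 (map ψ (g p))
  have hghom : ∀ p, (g p).IsHomogeneous δ := by
    rintro ⟨k, m'⟩
    have h1 : (monomial m'.1 (1 : MvPolynomial (CoeffIdx n n d) ℤ)).IsHomogeneous (δ - d k) :=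
      isHomogeneous_monomial _
        (by rw [degree_eq_sum_univ]; exact (Finset.mem_finsuppAntidiag.mp m'.2).1)
    have h2 := h1.mul (genericHom_isHomogeneous n n d k)
    rwa [Nat.sub_add_cancel (hdle k)] at h2
  have hgmem : ∀ p, g p ∈ Ideal.span (Set.range (genericHom n n d)) := fun p =>
    Ideal.mul_mem_left _ _ (Ideal.subset_span (Set.mem_range_self p.1))
  -- Step D : coefficient vectors of elements of J of degree δ are spanned by the w's
  have hsingle : ∀ (m' : Fin n →₀ ℕ) (k : Fin n),
      (fun m : {m : Fin n →₀ ℕ // m ∈ V} =>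
        coeff m.1 (monomial m' (1 : L) * map ψ (genericHom n n d k)))
        ∈ Submodule.span L (Set.range w) := by
    intro m' k
    by_cases hcase : (∑ i, m' i) + d k = δ
    · have hss : Finset.univ.sum ⇑m' = ∑ i, m' i := rfl
      have hm'mem : m' ∈ Finset.finsuppAntidiag (Finset.univ : Finset (Fin n)) (δ - d k) :=
        Finset.mem_finsuppAntidiag.mpr ⟨by omega, Finset.subset_univ _⟩
      have heq : monomial m' (1 : L) * map ψ (genericHom n n d k)
          = map ψ (g ⟨k, ⟨m', hm'mem⟩⟩) := by
        show _ = map ψ (monomial m' 1 * genericHom n n d k)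
        rw [map_mul, map_monomial, RingHom.map_one]
      rw [heq]
      exact Submodule.subset_span ⟨⟨k, ⟨m', hm'mem⟩⟩, rfl⟩
    · have hhom : (monomial m' (1 : L) * map ψ (genericHom n n d k)).IsHomogeneous
          ((∑ i, m' i) + d k) :=
        (isHomogeneous_monomial _ (degree_eq_sum_univ m')).mul
          ((genericHom_isHomogeneous n n d k).map ψ)
      have hz : (fun m : {m : Fin n →₀ ℕ // m ∈ V} =>
          coeff m.1 (monomial m' (1 : L) * map ψ (genericHom n n d k))) = 0 := by
        funext m
        have hmδ : (m.1).degree = δ := by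
          rw [degree_eq_sum_univ]; exact (Finset.mem_finsuppAntidiag.mp m.2).1
        exact hhom.coeff_eq_zero (by rw [hmδ]; omega)
      rw [hz]
      exact Submodule.zero_mem _
  have hspanJ : ∀ q ∈ J, (fun m : {m : Fin n →₀ ℕ // m ∈ V} => coeff m.1 q)
      ∈ Submodule.span L (Set.range w) := by
    intro q hq
    rw [hJ] at hq
    obtain ⟨c, hc⟩ := Ideal.mem_span_range_iff_exists_fun.mp hq
    rw [← hc]
    have hsum1 : (fun m : {m : Fin n →₀ ℕ // m ∈ V} =>
        coeff m.1 (∑ k, c k * map ψ (genericHom n n d k)))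
        = ∑ k, (fun m : {m : Fin n →₀ ℕ // m ∈ V} =>
            coeff m.1 (c k * map ψ (genericHom n n d k))) := by
      funext m
      rw [coeff_sum, Finset.sum_apply]
    rw [hsum1]
    refine Submodule.sum_mem _ fun k _ => ?_
    -- expand c k into monomials
    have hck : c k * map ψ (genericHom n n d k)
        = ∑ m' ∈ (c k).support, C (coeff m' (c k)) *
            (monomial m' (1 : L) * map ψ (genericHom n n d k)) := by
      conv_lhs => rw [(c k).as_sum, Finset.sum_mul]
      refine Finset.sum_congr rfl fun m' _ => ?_
      rw [← mul_assoc, C_mul_monomial, mul_one]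
    rw [hck]
    have hsum2 : (fun m : {m : Fin n →₀ ℕ // m ∈ V} =>
        coeff m.1 (∑ m' ∈ (c k).support, C (coeff m' (c k)) *
          (monomial m' (1 : L) * map ψ (genericHom n n d k))))
        = ∑ m' ∈ (c k).support, (coeff m' (c k)) •
            (fun m : {m : Fin n →₀ ℕ // m ∈ V} =>
              coeff m.1 (monomial m' (1 : L) * map ψ (genericHom n n d k))) := by
      funext m
      rw [coeff_sum, Finset.sum_apply]
      exact Finset.sum_congr rfl fun m' _ => by rw [coeff_C_mul, Pi.smul_apply, smul_eq_mul]
    rw [hsum2]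
    exact Submodule.sum_mem _ fun m' _ => Submodule.smul_mem _ _ (hsingle m' k)
  -- Step E : the w's span everything
  have hw_top : Submodule.span L (Set.range w) = ⊤ := by
    rw [eq_top_iff]
    intro v _
    have hv : v = ∑ m : {m : Fin n →₀ ℕ // m ∈ V}, v m •
        (fun m₂ : {m : Fin n →₀ ℕ // m ∈ V} => coeff m₂.1 (monomial m.1 (1 : L))) := by
      funext m₂
      rw [Finset.sum_apply]
      have : ∀ m : {m : Fin n →₀ ℕ // m ∈ V},
          (v m • fun m₂ : {m : Fin n →₀ ℕ // m ∈ V} =>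
            coeff m₂.1 (monomial m.1 (1 : L))) m₂ = if m = m₂ then v m else 0 := by
        intro m
        rw [Pi.smul_apply, smul_eq_mul, coeff_monomial]
        by_cases h : m = m₂
        · rw [if_pos h, if_pos (congrArg Subtype.val h), mul_one]
        · rw [if_neg h, if_neg (fun h2 => h (Subtype.ext h2)), mul_zero]
      rw [Finset.sum_congr rfl (fun m _ => this m), Finset.sum_ite_eq' Finset.univ m₂]
      simp
    rw [hv]
    refine Submodule.sum_mem _ fun m _ => Submodule.smul_mem _ _
      (hspanJ _ (hmono m.1 (Finset.mem_finsuppAntidiag.mp m.2).1))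
  -- Step F : extract a basis and the matrix
  obtain ⟨b, hbsub, hbspan, hbind⟩ := exists_linearIndependent L (Set.range w)
  rw [hw_top] at hbspan
  let B₀ : Module.Basis b L ({m : Fin n →₀ ℕ // m ∈ V} → L) :=
    Module.Basis.mk hbind (by rw [Subtype.range_coe, hbspan])
  let eqv : b ≃ {m : Fin n →₀ ℕ // m ∈ V} := B₀.indexEquiv (Pi.basisFun L _)
  let B : Module.Basis {m : Fin n →₀ ℕ // m ∈ V} L ({m : Fin n →₀ ℕ // m ∈ V} → L) :=
    B₀.reindex eqv
  have hB : ∀ m : {m : Fin n →₀ ℕ // m ∈ V}, ∃ p, w p = B m := by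
    intro m
    have hmem : (B m : {m : Fin n →₀ ℕ // m ∈ V} → L) ∈ Set.range w := by
      apply hbsub
      show (B₀.reindex eqv) m ∈ b
      rw [Module.Basis.reindex_apply, Module.Basis.mk_apply]
      exact (eqv.symm m).2
    exact hmem
  choose u hu using hB
  set M : Matrix {m : Fin n →₀ ℕ // m ∈ V} {m : Fin n →₀ ℕ // m ∈ V}
      (MvPolynomial (CoeffIdx n n d) ℤ) :=
    Matrix.of fun m m₂ => coeff m.1 (g (u m₂)) with hM
  have hmap : (ψ.mapMatrix M) = (Pi.basisFun L _).toMatrix B := by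
    ext m m₂
    rw [RingHom.mapMatrix_apply, Matrix.map_apply, Module.Basis.toMatrix_apply, Pi.basisFun_repr]
    show ψ (coeff m.1 (g (u m₂))) = B m₂ m
    rw [← coeff_map, ← hu m₂]
  have hdet0 : ψ M.det ≠ 0 := by
    rw [RingHom.map_det, hmap]
    intro h0
    have h1 := congrArg Matrix.det ((Pi.basisFun L _).toMatrix_mul_toMatrix_flip B)
    rw [Matrix.det_mul, Matrix.det_one, h0, zero_mul] at h1
    exact zero_ne_one h1
  -- Step G : the inertia certificate via Cramer's rule
  have hmhatmem : Finsupp.single (⟨0, hn⟩ : Fin n) δ ∈ V := by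
    rw [hV, Finset.mem_finsuppAntidiag]
    refine ⟨?_, Finset.subset_univ _⟩
    simp [Finsupp.single_apply, Finset.sum_ite_eq]
  set mhat : {m : Fin n →₀ ℕ // m ∈ V} := ⟨Finsupp.single (⟨0, hn⟩ : Fin n) δ, hmhatmem⟩ with hmhat
  have hkey : (X (⟨0, hn⟩ : Fin n) :
        MvPolynomial (Fin n) (MvPolynomial (CoeffIdx n n d) ℤ)) ^ δ * C M.det
      = ∑ q : {m : Fin n →₀ ℕ // m ∈ V}, C (M.adjugate q mhat) * g (u q) := by
    apply MvPolynomial.ext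
    intro m
    rw [X_pow_eq_monomial]
    have hmon : (monomial (Finsupp.single (⟨0, hn⟩ : Fin n) δ)
          (1 : MvPolynomial (CoeffIdx n n d) ℤ)) * C M.det
        = monomial (Finsupp.single (⟨0, hn⟩ : Fin n) δ) M.det := by
      rw [mul_comm, C_mul_monomial, mul_one]
    rw [hmon, coeff_monomial, coeff_sum]
    simp only [coeff_C_mul]
    by_cases hdeg : Finset.univ.sum ⇑m = δ
    · have hmV : m ∈ V := by
        rw [hV, Finset.mem_finsuppAntidiag]
        exact ⟨hdeg, Finset.subset_univ _⟩
      have hco : ∀ q, coeff m (g (u q)) = M ⟨m, hmV⟩ q := fun q => rfl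
      simp only [hco]
      have h2 : (∑ q, M.adjugate q mhat * M ⟨m, hmV⟩ q) = (M * M.adjugate) ⟨m, hmV⟩ mhat := by
        rw [Matrix.mul_apply]
        exact Finset.sum_congr rfl fun q _ => mul_comm _ _
      rw [h2, Matrix.mul_adjugate, Matrix.smul_apply, Matrix.one_apply, smul_eq_mul]
      by_cases he : (⟨m, hmV⟩ : {m : Fin n →₀ ℕ // m ∈ V}) = mhat
      · rw [if_pos he, if_pos, mul_one]
        exact (congrArg Subtype.val he).symm
      · rw [if_neg he, if_neg, mul_zero]
        intro h
        exact he (Subtype.ext h.symm)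
    · rw [if_neg]
      · have hz : ∀ q, coeff m (g (u q)) = 0 := fun q =>
          (hghom (u q)).coeff_eq_zero (by rw [degree_eq_sum_univ]; exact hdeg)
        simp [hz]
      · intro h
        apply hdeg
        rw [← h]
        exact (Finset.mem_finsuppAntidiag.mp (hV ▸ hmhatmem)).1
  have hintf : IsInertiaForm n n d M.det :=
    ⟨⟨0, hn⟩, δ, by
      rw [hkey]
      exact Ideal.sum_mem _ fun q _ => Ideal.mul_mem_left _ _ (hgmem (u q))⟩
  obtain ⟨c, hc⟩ := Ideal.mem_span_singleton.mp ((hR _).mp hintf)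
  intro hφR
  apply hdet0
  rw [hc, map_mul, hψ, RingHom.comp_apply, hφR, map_zero, zero_mul]

/-- let `R` generate the (principal) ideal of inertia forms of `n`
generic homogeneous polynomials in `n` variables of positive degrees, and let
`φ : ℤ[A] → K` be a specialization of the coefficients in a field `K`. Then
`φ(R) = 0` iff the specialized system `φ(F 0) = 0, …, φ(F (n-1)) = 0` has a
non-trivial zero in the algebraic closure of `K`. -/
theorem resultant_vanishes_iff_nontrivial_zero (n : ℕ) (d : Fin n → ℕ)
    (hd : ∀ i, 0 < d i) (R : MvPolynomial (CoeffIdx n n d) ℤ)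
    (hR : ∀ T, IsInertiaForm n n d T ↔ T ∈ Ideal.span {R})
    {K : Type*} [Field K] (φ : MvPolynomial (CoeffIdx n n d) ℤ →+* K) :
    φ R = 0 ↔
      ∃ x : Fin n → AlgebraicClosure K, x ≠ 0 ∧
        ∀ i, aeval x (map φ (genericHom n n d i)) = 0 := by
  rcases Nat.eq_zero_or_pos n with hn | hn
  · subst hn
    obtain ⟨i, τ, hm⟩ := (hR R).mpr (Ideal.mem_span_singleton_self R)
    exact i.elim0
  constructor
  · intro hφ
    by_contra hcon
    exact hard_direction n hn d hd R hR φ hcon hφ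
  · rintro ⟨x, hx0, hxz⟩
    exact easy_direction n d R hR φ x hx0 hxz
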